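/- Let V be a finite-dimensional vector space over ℚ with a symmetric bilinear form B satisfying the Hodge index condition. Let n ≥ 4 and let (A₁, …, Aₙ) be a cyclic toric family of length n in (V, B). If there are indices i ≠ j with B(A_i, A_i) = 0, B(A_j, A_j) = 0 and B(A_i, A_j) = 0, then n = 4 and j ≡ i + 2 (mod 4). -/

import Mathlib

/-- A symmetric bilinear form `B` on a ℚ-vector space `V` satisfies the Hodge index condition
if `V = C⁺ ⊕ C⁻` with `B(C⁺, C⁻) = 0`, `dim C⁺ = 1`, `B` positive definite on `C⁺` and
negative definite on `C⁻`. -/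
def HodgeIndexCondition (V : Type*) [AddCommGroup V] [Module ℚ V]
    (B : V →ₗ[ℚ] V →ₗ[ℚ] ℚ) : Prop :=
  ∃ Cplus Cminus : Submodule ℚ V, IsCompl Cplus Cminus ∧
    (∀ x ∈ Cplus, ∀ y ∈ Cminus, B x y = 0) ∧
    Module.finrank ℚ Cplus = 1 ∧
    (∀ x ∈ Cplus, x ≠ 0 → 0 < B x x) ∧
    (∀ y ∈ Cminus, y ≠ 0 → B y y < 0)

/-- A cyclic toric family of length n: B(A_i, A_{i+1}) ≠ 0 for all i (indices mod n), and
B(A_i, A_j) = 0 whenever i, j are non-adjacent mod n. -/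
def CyclicToricFamily {V : Type*} [AddCommGroup V] [Module ℚ V]
    (B : V →ₗ[ℚ] V →ₗ[ℚ] ℚ) (n : ℕ) (A : ZMod n → V) : Prop :=
  (∀ i : ZMod n, B (A i) (A (i + 1)) ≠ 0) ∧
  (∀ i j : ZMod n, j ≠ i - 1 → j ≠ i → j ≠ i + 1 → B (A i) (A j) = 0)

/-- Two nonzero isotropic vectors orthogonal to each other are proportional,
under the Hodge index condition. -/
lemma isotropic_proportional {V : Type*} [AddCommGroup V] [Module ℚ V]
    (B : V →ₗ[ℚ] V →ₗ[ℚ] ℚ) (hsymm : ∀ x y : V, B x y = B y x)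
    (hHodge : HodgeIndexCondition V B)
    (x y : V) (hx : x ≠ 0) (hy : y ≠ 0)
    (hxx : B x x = 0) (hyy : B y y = 0) (hxy : B x y = 0) :
    ∃ c : ℚ, c ≠ 0 ∧ x = c • y := by
  obtain ⟨P, M, hcompl, horth, hrank, hpos, hneg⟩ := hHodge
  obtain ⟨p, m, hp, hm, hpm⟩ := Submodule.codisjoint_iff_exists_add_eq.mp hcompl.codisjoint x
  obtain ⟨q, w, hq, hw, hqw⟩ := Submodule.codisjoint_iff_exists_add_eq.mp hcompl.codisjoint y
  have hp0 : p ≠ 0 := by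
    rintro rfl
    have hxm : x = m := by rw [← hpm, zero_add]
    have := hneg x (by rw [hxm]; exact hm) hx
    rw [hxx] at this; exact lt_irrefl 0 this
  have hq0 : q ≠ 0 := by
    rintro rfl
    have hym : y = w := by rw [← hqw, zero_add]
    have := hneg y (by rw [hym]; exact hw) hy
    rw [hyy] at this; exact lt_irrefl 0 this
  have hq0' : (⟨q, hq⟩ : P) ≠ 0 := fun h => hq0 (congrArg Subtype.val h)
  obtain ⟨c, hc⟩ := (finrank_eq_one_iff_of_nonzero' (⟨q, hq⟩ : P) hq0').mp hrank ⟨p, hp⟩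
  have hpq : c • q = p := congrArg Subtype.val hc
  have hc0 : c ≠ 0 := by rintro rfl; rw [zero_smul] at hpq; exact hp0 hpq.symm
  refine ⟨c, hc0, ?_⟩
  have hz : x - c • y = m - c • w := by
    rw [← hpm, ← hqw, smul_add, hpq]; abel
  have hzM : x - c • y ∈ M := by
    rw [hz]; exact M.sub_mem hm (M.smul_mem c hw)
  have hyx : B y x = 0 := by rw [hsymm]; exact hxy
  have hzz : B (x - c • y) (x - c • y) = 0 := by
    simp [map_sub, map_smul, LinearMap.sub_apply, LinearMap.smul_apply, smul_eq_mul,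
      hxx, hyy, hxy, hyx]
  have hz0 : x - c • y = 0 := by
    by_contra h
    have := hneg _ hzM h
    rw [hzz] at this; exact lt_irrefl 0 this
  exact sub_eq_zero.mp hz0

/-- In a cyclic toric family of length n ≥ 4 with respect to a symmetric
bilinear form satisfying the Hodge index condition, if i ≠ j with B(A_i,A_i) = 0,
B(A_j,A_j) = 0 and B(A_i,A_j) = 0, then n = 4 and j = i + 2. -/
theorem stmt_13 (V : Type*) [AddCommGroup V] [Module ℚ V] [FiniteDimensional ℚ V]
    (B : V →ₗ[ℚ] V →ₗ[ℚ] ℚ) (hsymm : ∀ x y : V, B x y = B y x)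
    (hHodge : HodgeIndexCondition V B)
    (n : ℕ) (hn : 4 ≤ n) (A : ZMod n → V)
    (hA : CyclicToricFamily B n A)
    (i j : ZMod n) (hij : i ≠ j)
    (hii : B (A i) (A i) = 0) (hjj : B (A j) (A j) = 0) (hij0 : B (A i) (A j) = 0) :
    n = 4 ∧ j = i + 2 := by
  obtain ⟨hadj, horth⟩ := hA
  have hAi0 : A i ≠ 0 := fun h => hadj i (by rw [h]; simp)
  have hAj0 : A j ≠ 0 := fun h => hadj j (by rw [h]; simp)
  obtain ⟨c, hc0, hc⟩ := isotropic_proportional B hsymm hHodge (A i) (A j) hAi0 hAj0 hii hjj hij0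
  have hBi : ∀ u, B (A i) u = c * B (A j) u := fun u => by
    rw [hc, map_smul, LinearMap.smul_apply, smul_eq_mul]
  have hji1 : j ≠ i - 1 := by
    intro h
    exact hadj (i - 1) (by rw [sub_add_cancel, ← h, hsymm]; exact hij0)
  have hji2 : j ≠ i + 1 := fun h => hadj i (h ▸ hij0)
  have h1 : j + 1 = i - 1 := by
    by_contra h
    have h2 : j + 1 ≠ i := fun hh => hji1 (eq_sub_of_add_eq hh)
    have h3 : j + 1 ≠ i + 1 := fun hh => hij (add_right_cancel hh).symm
    have h0 := horth i (j + 1) h h2 h3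
    rw [hBi] at h0
    exact hadj j ((mul_eq_zero.mp h0).resolve_left hc0)
  have h2 : j - 1 = i + 1 := by
    by_contra h
    have ha : j - 1 ≠ i - 1 := fun hh => hij (sub_left_inj.mp hh).symm
    have hb : j - 1 ≠ i := fun hh => hji2 (eq_add_of_sub_eq hh)
    have h0 := horth i (j - 1) ha hb h
    rw [hBi, hsymm] at h0
    have hz := (mul_eq_zero.mp h0).resolve_left hc0
    exact hadj (j - 1) (by rw [sub_add_cancel]; exact hz)
  have hj1 : j = i - 2 := by linear_combination h1
  have hj2 : j = i + 2 := by linear_combination h2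
  have h4 : ((4 : ℕ) : ZMod n) = 0 := by push_cast; linear_combination hj1 - hj2
  have hdvd : n ∣ 4 := (ZMod.natCast_eq_zero_iff 4 n).mp h4
  exact ⟨Nat.le_antisymm (Nat.le_of_dvd (by norm_num) hdvd) hn, hj2⟩
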